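/- If for ℙ-a.e. ω the family {P^{(n)}_{σ^{-n}ω} 1_X}_n ⊂ L¹(X,m) is weakly precompact, then for any Banach limit LIM and ℙ-a.e. ω, the set function μ_ω(E) = LIM({∫_E P^{(n)}_{σ^{-n}ω} 1_X dm}_n) is a countably additive probability measure on (X,𝒜), absolutely continuous with respect to m, and satisfies P_ω (dμ_ω/dm) = dμ_{σω}/dm a.e. -/

import Mathlib

open MeasureTheory Filter

/-- `P_ω^{(n)} = P_{σ^{n-1}ω} ∘ ⋯ ∘ P_ω`, `P_ω^{(0)} = id`. -/
noncomputable def clmCocycle {Ω 𝔛 : Type*} [NormedAddCommGroup 𝔛] [NormedSpace ℝ 𝔛]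
    (σ : Ω → Ω) (P : Ω → (𝔛 →L[ℝ] 𝔛)) : ℕ → Ω → (𝔛 →L[ℝ] 𝔛)
  | 0, _ => ContinuousLinearMap.id ℝ 𝔛
  | n + 1, ω => (clmCocycle σ P n (σ ω)).comp (P ω)

/-- The constant function `1` as an element of `L¹(X,m)`. -/
noncomputable def oneLp {X : Type*} [MeasurableSpace X] (m : Measure X)
    [IsProbabilityMeasure m] : Lp ℝ 1 m :=
  indicatorConstLp 1 MeasurableSet.univ (by simp) (1 : ℝ)

/-- Weak sequential precompactness of a sequence. -/
def WeaklySeqPrecompact {E : Type*} [NormedAddCommGroup E] [NormedSpace ℝ E]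
    (u : ℕ → E) : Prop :=
  ∀ φ : ℕ → ℕ, StrictMono φ → ∃ ψ : ℕ → ℕ, StrictMono ψ ∧ ∃ x : E,
    ∀ ℓ : E →L[ℝ] ℝ, Tendsto (fun k => ℓ (u (φ (ψ k)))) atTop (nhds (ℓ x))

open scoped ENNReal

section LIMLemmas

variable {LIM : (ℕ → ℝ) →ₗ[ℝ] ℝ}

def LimPos (LIM : (ℕ → ℝ) →ₗ[ℝ] ℝ) : Prop :=
  ∀ u : ℕ → ℝ, (∃ M, ∀ n, |u n| ≤ M) → (∀ n, 0 ≤ u n) → 0 ≤ LIM u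

def LimShift (LIM : (ℕ → ℝ) →ₗ[ℝ] ℝ) : Prop :=
  ∀ u : ℕ → ℝ, (∃ M, ∀ n, |u n| ≤ M) → LIM (fun n => u (n + 1)) = LIM u

def LimLim (LIM : (ℕ → ℝ) →ₗ[ℝ] ℝ) : Prop :=
  ∀ (u : ℕ → ℝ) (a : ℝ), Tendsto u atTop (nhds a) → LIM u = a

lemma lim_const (hlim : LimLim LIM) (c : ℝ) : LIM (fun _ => c) = c :=
  hlim _ c tendsto_const_nhds

lemma lim_le_of_le (hpos : LimPos LIM) (hlim : LimLim LIM) {v : ℕ → ℝ} {M c : ℝ}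
    (hb : ∀ n, |v n| ≤ M) (h : ∀ n, v n ≤ c) : LIM v ≤ c := by
  have h0 : 0 ≤ LIM (fun n => c - v n) := by
    refine hpos _ ⟨|c| + M, fun n => ?_⟩ fun n => by linarith [h n]
    have h1 := abs_le.1 (hb n)
    rw [abs_le]
    constructor <;> [linarith [neg_abs_le c]; linarith [le_abs_self c]]
  have h1 : LIM (fun n => c - v n) = c - LIM v := by
    have h2 : (fun n => c - v n) = (fun _ => c) - v := rfl
    rw [h2, map_sub, lim_const hlim]
  linarith

lemma lim_ge_of_ge (hpos : LimPos LIM) (hlim : LimLim LIM) {v : ℕ → ℝ} {M c : ℝ}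
    (hb : ∀ n, |v n| ≤ M) (h : ∀ n, c ≤ v n) : c ≤ LIM v := by
  have h2 : LIM (-v) ≤ -c :=
    lim_le_of_le hpos hlim (v := -v) (M := M)
      (fun n => by simpa using hb n) fun n => by simpa using h n
  rw [map_neg] at h2; linarith

lemma lim_abs_le (hpos : LimPos LIM) (hlim : LimLim LIM) {v : ℕ → ℝ} {M : ℝ}
    (hb : ∀ n, |v n| ≤ M) : |LIM v| ≤ M := by
  rw [abs_le]
  exact ⟨lim_ge_of_ge hpos hlim hb fun n => (abs_le.1 (hb n)).1,
    lim_le_of_le hpos hlim hb fun n => (abs_le.1 (hb n)).2⟩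

lemma lim_shift_k (hshift : LimShift LIM) {v : ℕ → ℝ} {M : ℝ}
    (hb : ∀ n, |v n| ≤ M) (k : ℕ) : LIM (fun n => v (n + k)) = LIM v := by
  induction k with
  | zero => simp
  | succ k ih =>
      have h2 : (fun n => v (n + (k + 1))) = fun n => (fun j => v (j + k)) (n + 1) := by
        funext n; congr 1; omega
      rw [h2]
      exact (hshift _ ⟨M, fun n => hb _⟩).trans ih

lemma lim_exists_ge (hpos : LimPos LIM) (hshift : LimShift LIM) (hlim : LimLim LIM)
    {v : ℕ → ℝ} {M c : ℝ} (hb : ∀ n, |v n| ≤ M)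
    (h : c < LIM v) : ∀ N, ∃ n, N ≤ n ∧ c < v n := by
  intro N
  by_contra hc
  push_neg at hc
  have h1 : LIM v = LIM (fun n => v (n + N)) := (lim_shift_k hshift hb N).symm
  have h2 : LIM (fun n => v (n + N)) ≤ c :=
    lim_le_of_le hpos hlim (M := M) (fun n => hb _) fun n => hc _ (Nat.le_add_left _ _)
  linarith

end LIMLemmas

section SetIntegralCLM

variable {X : Type*} [MeasurableSpace X] {m : Measure X} [IsProbabilityMeasure m]

/-- Integration over a set as a continuous linear functional on `L¹`. -/
noncomputable def setIntegralCLM (m : Measure X) [IsProbabilityMeasure m] (E : Set X) :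
    Lp ℝ 1 m →L[ℝ] ℝ :=
  LinearMap.mkContinuous
    { toFun := fun g => ∫ x in E, g x ∂m
      map_add' := fun f g => by
        have h : ⇑(f + g) =ᵐ[m.restrict E] ⇑f + ⇑g := ae_restrict_of_ae (Lp.coeFn_add f g)
        show ∫ x in E, (f + g) x ∂m = _
        rw [integral_congr_ae h]
        exact integral_add (L1.integrable_coeFn f).integrableOn
          (L1.integrable_coeFn g).integrableOn
      map_smul' := fun c f => by
        have h : ⇑(c • f) =ᵐ[m.restrict E] c • ⇑f := ae_restrict_of_ae (Lp.coeFn_smul c f)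
        show ∫ x in E, (c • f) x ∂m = c • ∫ x in E, f x ∂m
        rw [integral_congr_ae h]
        exact integral_smul c _ } 1
    (fun g => by
      rw [one_mul, L1.norm_eq_integral_norm]
      calc ‖∫ x in E, g x ∂m‖ ≤ ∫ x in E, ‖g x‖ ∂m := norm_integral_le_integral_norm _
        _ ≤ ∫ x, ‖g x‖ ∂m := setIntegral_le_integral (L1.integrable_coeFn g).norm
            (Eventually.of_forall fun x => norm_nonneg _))

@[simp] lemma setIntegralCLM_apply (E : Set X) (g : Lp ℝ 1 m) :
    setIntegralCLM m E g = ∫ x in E, g x ∂m := rfl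

end SetIntegralCLM

section Cocycle

variable {Ω : Type*}

lemma clmCocycle_succ' {𝔛 : Type*} [NormedAddCommGroup 𝔛] [NormedSpace ℝ 𝔛]
    (σ : Ω → Ω) (P : Ω → (𝔛 →L[ℝ] 𝔛)) (n : ℕ) (ω : Ω) :
    clmCocycle σ P (n + 1) ω = (P (σ^[n] ω)).comp (clmCocycle σ P n ω) := by
  induction n generalizing ω with
  | zero => simp [clmCocycle]
  | succ n ih =>
      show (clmCocycle σ P (n + 1) (σ ω)).comp (P ω) = _
      rw [ih (σ ω)]
      rw [Function.iterate_succ_apply]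
      rfl

variable [MeasurableSpace Ω]

lemma iter_cancel (σ : Ω ≃ᵐ Ω) : ∀ (k j : ℕ) (ω : Ω),
    σ^[k] (σ.symm^[k + j] ω) = σ.symm^[j] ω := by
  intro k
  induction k with
  | zero => simp
  | succ k ih =>
      intro j ω
      have h1 : (σ.symm)^[k + 1 + j] ω = σ.symm ((σ.symm)^[k + j] ω) := by
        rw [show k + 1 + j = (k + j) + 1 by omega, Function.iterate_succ_apply']
      rw [Function.iterate_succ_apply, h1, σ.apply_symm_apply, ih]

lemma iter_cancel_self (σ : Ω ≃ᵐ Ω) (n : ℕ) (ω : Ω) : σ^[n] (σ.symm^[n] ω) = ω := by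
  simpa using iter_cancel σ n 0 ω

lemma sigma_symm_succ (σ : Ω ≃ᵐ Ω) (n : ℕ) (ω : Ω) :
    σ (σ.symm^[n + 1] ω) = σ.symm^[n] ω := by
  have h := iter_cancel σ 1 n ω
  rw [show 1 + n = n + 1 by omega] at h
  simp only [Function.iterate_succ_apply', Function.iterate_one] at h ⊢
  exact h

end Cocycle

section Markov

variable {Ω : Type*} {X : Type*} [MeasurableSpace X] {m : Measure X} [IsProbabilityMeasure m]

/-- Positivity/integral-preservation property of a Markov operator. -/
def MarkovAt (m : Measure X) [IsProbabilityMeasure m]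
    (P : Ω → (Lp ℝ 1 m →L[ℝ] Lp ℝ 1 m)) (ω : Ω) : Prop :=
  (∀ g : Lp ℝ 1 m, 0 ≤ᵐ[m] ⇑g → 0 ≤ᵐ[m] ⇑(P ω g)) ∧
    (∀ g : Lp ℝ 1 m, ∫ x, (P ω g) x ∂m = ∫ x, g x ∂m)

lemma cocycle_pos_int (σ : Ω → Ω) (P : Ω → (Lp ℝ 1 m →L[ℝ] Lp ℝ 1 m)) :
    ∀ (n : ℕ) (ω₀ : Ω), (∀ k, k < n → MarkovAt m P (σ^[k] ω₀)) →
    ∀ g : Lp ℝ 1 m, 0 ≤ᵐ[m] ⇑g →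
      0 ≤ᵐ[m] ⇑(clmCocycle σ P n ω₀ g) ∧
        ∫ x, (clmCocycle σ P n ω₀ g) x ∂m = ∫ x, g x ∂m := by
  intro n
  induction n with
  | zero => intro ω₀ _ g hg; exact ⟨hg, rfl⟩
  | succ n ih =>
      intro ω₀ h g hg
      have h0 : MarkovAt m P ω₀ := by simpa using h 0 (Nat.succ_pos n)
      have hg' : 0 ≤ᵐ[m] ⇑(P ω₀ g) := h0.1 g hg
      have hmk : ∀ k, k < n → MarkovAt m P (σ^[k] (σ ω₀)) := by
        intro k hk
        have := h (k + 1) (Nat.succ_lt_succ hk)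
        rwa [Function.iterate_succ_apply] at this
      have hi := ih (σ ω₀) hmk (P ω₀ g) hg'
      refine ⟨hi.1, ?_⟩
      rw [show clmCocycle σ P (n + 1) ω₀ g = clmCocycle σ P n (σ ω₀) (P ω₀ g) from rfl,
        hi.2, h0.2 g]

/-- `oneLp` is a.e. nonnegative with integral one. -/
lemma oneLp_pos : 0 ≤ᵐ[m] ⇑(oneLp m) := by
  filter_upwards [indicatorConstLp_coeFn (p := 1) (μ := m)
    (hs := MeasurableSet.univ) (hμs := by simp) (c := (1:ℝ))] with x hx
  rw [oneLp, hx]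
  simp [Set.indicator_apply]

lemma oneLp_int : ∫ x, (oneLp m) x ∂m = 1 := by
  rw [oneLp, integral_indicatorConstLp]
  simp

/-- Basic bounds on set integrals of a nonnegative, integral-one element. -/
lemma setInt_mem01 {g : Lp ℝ 1 m} (hg : 0 ≤ᵐ[m] ⇑g) (hi : ∫ x, g x ∂m = 1)
    (E : Set X) : 0 ≤ ∫ x in E, g x ∂m ∧ ∫ x in E, g x ∂m ≤ 1 := by
  constructor
  · refine setIntegral_nonneg_of_ae_restrict ?_
    filter_upwards [ae_restrict_of_ae hg] with y hy using hy
  · rw [← hi]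
    exact setIntegral_le_integral (L1.integrable_coeFn g) hg

end Markov

section Core

variable {X : Type*} [MeasurableSpace X] {m : Measure X} [IsProbabilityMeasure m]
variable {LIM : (ℕ → ℝ) →ₗ[ℝ] ℝ}

lemma lim_mono (hpos : LimPos LIM) {v w : ℕ → ℝ} {M : ℝ}
    (hbv : ∀ n, |v n| ≤ M) (hbw : ∀ n, |w n| ≤ M) (h : ∀ n, v n ≤ w n) :
    LIM v ≤ LIM w := by
  have h0 : 0 ≤ LIM (w - v) := by
    refine hpos _ ⟨2 * M, fun n => ?_⟩ fun n => by simpa using h n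
    have h1 := abs_le.1 (hbv n); have h2 := abs_le.1 (hbw n)
    rw [abs_le]
    constructor <;> · simp only [Pi.sub_apply]; linarith
  rw [map_sub] at h0; linarith

lemma abs_setInt_le {g : Lp ℝ 1 m} (hg : 0 ≤ᵐ[m] ⇑g) (hi : ∫ x, g x ∂m = 1)
    (E : Set X) : |∫ x in E, g x ∂m| ≤ 1 := by
  have h := setInt_mem01 hg hi E
  rw [abs_le]; exact ⟨by linarith [h.1], h.2⟩

lemma nu_tendsto_zero
    (hpos : LimPos LIM) (hshift : LimShift LIM) (hlim : LimLim LIM)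
    {u : ℕ → Lp ℝ 1 m} (hupos : ∀ n, 0 ≤ᵐ[m] ⇑(u n)) (huint : ∀ n, ∫ x, u n x ∂m = 1)
    (hwpc : WeaklySeqPrecompact u)
    {E : ℕ → Set X} (hEm : ∀ k, MeasurableSet (E k)) (hEa : Antitone E)
    (hEi : (⋂ k, E k) = ∅) :
    Tendsto (fun k => LIM (fun n => ∫ x in E k, u n x ∂m)) atTop (nhds 0) := by
  set ν : ℕ → ℝ := fun k => LIM (fun n => ∫ x in E k, u n x ∂m) with hν
  have hb : ∀ k n, |∫ x in E k, u n x ∂m| ≤ 1 := fun k n =>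
    abs_setInt_le (hupos n) (huint n) _
  have hν0 : ∀ k, 0 ≤ ν k := fun k =>
    lim_ge_of_ge hpos hlim (hb k) fun n => (setInt_mem01 (hupos n) (huint n) _).1
  have hmono_int : ∀ {s t : Set X}, s ⊆ t → ∀ n,
      ∫ x in s, u n x ∂m ≤ ∫ x in t, u n x ∂m := by
    intro s t hst n
    refine setIntegral_mono_set (L1.integrable_coeFn (u n)).integrableOn ?_
      (HasSubset.Subset.eventuallyLE hst)
    filter_upwards [ae_restrict_of_ae (hupos n)] with y hy using hy
  -- it suffices to find, for every ε > 0, some K with ν K < ε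
  suffices hsuff : ∀ ε : ℝ, 0 < ε → ∃ K, ν K < ε by
    rw [Metric.tendsto_atTop]
    intro ε hε
    obtain ⟨K, hK⟩ := hsuff ε hε
    refine ⟨K, fun k hk => ?_⟩
    have hle : ν k ≤ ν K := by
      refine lim_mono hpos (hb k) (hb K) fun n => hmono_int (hEa hk) n
    rw [Real.dist_eq, sub_zero, abs_of_nonneg (hν0 k)]
    exact lt_of_le_of_lt hle hK
  by_contra hc
  push_neg at hc
  obtain ⟨ε, hε, hK⟩ := hc
  -- select a strictly monotone sequence of indices with large integrals
  have hsel : ∀ k N, ∃ n, N ≤ n ∧ ε / 2 < ∫ x in E k, u n x ∂m := by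
    intro k N
    exact lim_exists_ge hpos hshift hlim (hb k)
      (lt_of_lt_of_le (by linarith) (hK k)) N
  choose g hg1 hg2 using hsel
  set φ : ℕ → ℕ := fun k => Nat.rec (g 0 0) (fun k p => g (k + 1) (p + 1)) k with hφdef
  have hφsucc : ∀ k, φ (k + 1) = g (k + 1) (φ k + 1) := fun k => rfl
  have hφmono : StrictMono φ := by
    refine strictMono_nat_of_lt_succ fun k => ?_
    have := hg1 (k + 1) (φ k + 1)
    rw [hφsucc]; omega
  have hφbig : ∀ k, ε / 2 < ∫ x in E k, u (φ k) x ∂m := by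
    intro k
    cases k with
    | zero => exact hg2 0 0
    | succ k => rw [hφsucc]; exact hg2 (k + 1) (φ k + 1)
  obtain ⟨ψ, hψ, z, hz⟩ := hwpc φ hφmono
  have key : ∀ k, ε / 2 ≤ ∫ x in E k, z x ∂m := by
    intro k
    have hxk := hz (setIntegralCLM m (E k))
    simp only [setIntegralCLM_apply] at hxk
    refine ge_of_tendsto hxk ?_
    rw [eventually_atTop]
    refine ⟨k, fun j hj => ?_⟩
    have h1 : E (ψ j) ⊆ E k := hEa (le_trans hj (hψ.le_apply))
    exact le_of_lt (lt_of_lt_of_le (hφbig (ψ j)) (hmono_int h1 (φ (ψ j))))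
  have hlim0 : Tendsto (fun k => ∫ x in E k, z x ∂m) atTop (nhds 0) := by
    have heq : ∀ k, ∫ x in E k, z x ∂m = ∫ x, (E k).indicator (⇑z) x ∂m := fun k =>
      (integral_indicator (hEm k)).symm
    simp_rw [heq]
    have h0 : (0 : ℝ) = ∫ x, (0 : X → ℝ) x ∂m := by simp
    rw [h0]
    refine tendsto_integral_of_dominated_convergence (fun a => ‖z a‖)
      (fun k => (Lp.aestronglyMeasurable z).indicator (hEm k))
      (L1.integrable_coeFn z).norm
      (fun k => Eventually.of_forall fun a => norm_indicator_le_norm_self _ _) ?_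
    refine Eventually.of_forall fun a => ?_
    have ha : ∃ K, a ∉ E K := by
      by_contra hna
      push_neg at hna
      have : a ∈ ⋂ k, E k := Set.mem_iInter.2 hna
      rw [hEi] at this; exact this
    obtain ⟨K, hKa⟩ := ha
    refine Tendsto.congr' ?_ (tendsto_const_nhds (x := (0:ℝ)))
    rw [EventuallyEq, eventually_atTop]
    refine ⟨K, fun k hk => ?_⟩
    have : a ∉ E k := fun h => hKa (hEa hk h)
    simp [Set.indicator_apply, this]
  have : ε / 2 ≤ 0 := ge_of_tendsto hlim0 (Eventually.of_forall key)
  linarith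

end Core

section ExistsMeasure

variable {X : Type*} [MeasurableSpace X] {m : Measure X} [IsProbabilityMeasure m]
variable {LIM : (ℕ → ℝ) →ₗ[ℝ] ℝ}

lemma exists_measure_density
    (hpos : LimPos LIM) (hshift : LimShift LIM) (hlim : LimLim LIM)
    {u : ℕ → Lp ℝ 1 m} (hupos : ∀ n, 0 ≤ᵐ[m] ⇑(u n)) (huint : ∀ n, ∫ x, u n x ∂m = 1)
    (hwpc : WeaklySeqPrecompact u) :
    ∃ (μ : Measure X) (d : Lp ℝ 1 m),
      (∀ E : Set X, MeasurableSet E →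
        μ E = ENNReal.ofReal (LIM (fun n => ∫ x in E, u n x ∂m))) ∧
      IsProbabilityMeasure μ ∧ μ ≪ m ∧
      (⇑d =ᵐ[m] fun x => (μ.rnDeriv m x).toReal) ∧ (0 ≤ᵐ[m] ⇑d) ∧
      (∀ B : Set X, MeasurableSet B →
        LIM (fun n => ∫ x in B, u n x ∂m) = ∫ x in B, d x ∂m) := by
  classical
  set ν : Set X → ℝ := fun E => LIM (fun n => ∫ x in E, u n x ∂m) with hνdef
  have hb : ∀ (E : Set X) n, |∫ x in E, u n x ∂m| ≤ 1 := fun E n =>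
    abs_setInt_le (hupos n) (huint n) _
  have hν0 : ∀ E : Set X, 0 ≤ ν E := fun E =>
    lim_ge_of_ge hpos hlim (hb E) fun n => (setInt_mem01 (hupos n) (huint n) _).1
  have hνempty : ν ∅ = 0 := by
    have h1 : (fun n => ∫ x in (∅ : Set X), u n x ∂m) = fun _ => (0 : ℝ) := by
      funext n; simp
    rw [hνdef]; simp only [h1]
    exact lim_const hlim 0
  have hνadd : ∀ s t : Set X, MeasurableSet t → Disjoint s t →
      ν (s ∪ t) = ν s + ν t := by
    intro s t ht hd
    have h1 : ∀ n, ∫ x in s ∪ t, u n x ∂m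
        = ∫ x in s, u n x ∂m + ∫ x in t, u n x ∂m := fun n =>
      setIntegral_union hd ht (L1.integrable_coeFn (u n)).integrableOn
        (L1.integrable_coeFn (u n)).integrableOn
    have h2 : (fun n => ∫ x in s ∪ t, u n x ∂m)
        = (fun n => ∫ x in s, u n x ∂m) + fun n => ∫ x in t, u n x ∂m := by
      funext n; exact h1 n
    rw [hνdef]; simp only [h2]
    exact map_add LIM _ _
  -- countable additivity
  have hνσ : ∀ (f : ℕ → Set X), (∀ i, MeasurableSet (f i)) →
      Pairwise (Function.onFun Disjoint f) →
      HasSum (fun i => ν (f i)) (ν (⋃ i, f i)) := by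
    intro f hfm hfd
    rw [hasSum_iff_tendsto_nat_of_nonneg (fun i => hν0 _)]
    set U : ℕ → Set X := fun N => ⋃ i ∈ Finset.range N, f i with hUdef
    set R : ℕ → Set X := fun N => ⋃ i, f (N + i) with hRdef
    have hUm : ∀ N, MeasurableSet (U N) := fun N =>
      (Finset.range N).measurableSet_biUnion fun i _ => hfm i
    have hRm : ∀ N, MeasurableSet (R N) := fun N =>
      MeasurableSet.iUnion fun i => hfm _
    have hRa : Antitone R := by
      intro a b hab
      refine Set.iUnion_subset fun i => ?_
      have : b + i = a + (b - a + i) := by omega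
      rw [this]
      exact Set.subset_iUnion (fun j => f (a + j)) _
    have hRi : (⋂ N, R N) = ∅ := by
      rw [Set.eq_empty_iff_forall_notMem]
      intro x hx
      have h0 : x ∈ R 0 := Set.mem_iInter.1 hx 0
      obtain ⟨i, hi⟩ := Set.mem_iUnion.1 h0
      have h1 : x ∈ R (i + 1) := Set.mem_iInter.1 hx (i + 1)
      obtain ⟨j, hj⟩ := Set.mem_iUnion.1 h1
      have : (0 + i : ℕ) ≠ i + 1 + j := by omega
      exact Set.disjoint_left.1 (hfd this) hi hj
    have hsplit : ∀ N, ν (⋃ i, f i) = (∑ i ∈ Finset.range N, ν (f i)) + ν (R N) := by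
      intro N
      have hdisj : Disjoint (U N) (R N) := by
        rw [Set.disjoint_left]
        rintro x hxU hxR
        simp only [hUdef, Set.mem_iUnion, Finset.mem_range] at hxU
        obtain ⟨i, hi, hxi⟩ := hxU
        obtain ⟨j, hj⟩ := Set.mem_iUnion.1 hxR
        exact Set.disjoint_left.1 (hfd (show i ≠ N + j by omega)) hxi hj
      have hcover : (⋃ i, f i) = U N ∪ R N := by
        apply Set.Subset.antisymm
        · refine Set.iUnion_subset fun i => ?_
          rcases lt_or_ge i N with h | h
          · exact fun x hx => Or.inl (by
              simp only [hUdef, Set.mem_iUnion, Finset.mem_range]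
              exact ⟨i, h, hx⟩)
          · refine fun x hx => Or.inr (Set.mem_iUnion.2 ⟨i - N, ?_⟩)
            rwa [show N + (i - N) = i by omega]
        · refine Set.union_subset ?_ ?_
          · simp only [hUdef]
            refine Set.iUnion₂_subset fun i _ => Set.subset_iUnion f i
          · exact Set.iUnion_subset fun i => Set.subset_iUnion f (N + i)
      have hUsum : ∀ M, ν (U M) = ∑ i ∈ Finset.range M, ν (f i) := by
        intro M
        induction M with
        | zero => simpa [hUdef] using hνempty
        | succ M ih =>
            have hU : U (M + 1) = U M ∪ f M := by
              simp only [hUdef, Finset.range_add_one]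
              rw [Finset.set_biUnion_insert]
              exact Set.union_comm _ _
            have hdU : Disjoint (U M) (f M) := by
              rw [Set.disjoint_left]
              rintro x hxU hxM
              simp only [hUdef, Set.mem_iUnion, Finset.mem_range] at hxU
              obtain ⟨i, hi, hxi⟩ := hxU
              exact Set.disjoint_left.1 (hfd (show i ≠ M by omega)) hxi hxM
            rw [hU, hνadd _ _ (hfm M) hdU, ih, Finset.sum_range_succ]
      rw [hcover, hνadd _ _ (hRm N) hdisj, hUsum]
    have hR0 : Tendsto (fun N => ν (R N)) atTop (nhds 0) :=
      nu_tendsto_zero hpos hshift hlim hupos huint hwpc hRm hRa hRi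
    have := Tendsto.const_sub (ν (⋃ i, f i)) hR0
    rw [sub_zero] at this
    refine this.congr fun N => ?_
    rw [hsplit N]; ring
  -- the measure
  set μ : Measure X := Measure.ofMeasurable (fun E _ => ENNReal.ofReal (ν E))
    (by show ENNReal.ofReal (ν ∅) = 0; rw [hνempty]; simp)
    (by
      intro f hfm hfd
      have hs := hνσ f hfm hfd
      show ENNReal.ofReal (ν (⋃ i, f i)) = ∑' i, ENNReal.ofReal (ν (f i))
      rw [← hs.tsum_eq,
        ENNReal.ofReal_tsum_of_nonneg (fun i => hν0 _) hs.summable]) with hμdef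
  have hμap : ∀ E : Set X, MeasurableSet E → μ E = ENNReal.ofReal (ν E) := fun E hE =>
    Measure.ofMeasurable_apply E hE
  have hνuniv : ν Set.univ = 1 := by
    have h1 : (fun n => ∫ x in (Set.univ : Set X), u n x ∂m) = fun _ => (1 : ℝ) := by
      funext n
      rw [Measure.restrict_univ]
      exact huint n
    rw [hνdef]; simp only [h1]
    exact lim_const hlim 1
  have hprob : IsProbabilityMeasure μ := by
    constructor
    rw [hμap _ MeasurableSet.univ, hνuniv]
    simp
  have hac : μ ≪ m := by
    refine Measure.AbsolutelyContinuous.mk fun E hE hE0 => ?_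
    have h1 : (fun n => ∫ x in E, u n x ∂m) = fun _ => (0 : ℝ) := by
      funext n
      rw [Measure.restrict_eq_zero.2 hE0]
      simp
    rw [hμap E hE]
    have : ν E = 0 := by rw [hνdef]; simp only [h1]; exact lim_const hlim 0
    rw [this]; simp
  haveI := hprob
  have hint : Integrable (fun x => (μ.rnDeriv m x).toReal) m :=
    Measure.integrable_toReal_rnDeriv
  set d : Lp ℝ 1 m := (memLp_one_iff_integrable.mpr hint).toLp _ with hddef
  have hd4 : ⇑d =ᵐ[m] fun x => (μ.rnDeriv m x).toReal := MemLp.coeFn_toLp _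
  have hd5 : 0 ≤ᵐ[m] ⇑d := by
    filter_upwards [hd4] with x hx
    rw [hx]; exact ENNReal.toReal_nonneg
  refine ⟨μ, d, hμap, hprob, hac, hd4, hd5, fun B hB => ?_⟩
  have h2 : ∫ x in B, d x ∂m = ∫ x in B, (μ.rnDeriv m x).toReal ∂m :=
    integral_congr_ae (ae_restrict_of_ae hd4)
  rw [h2, Measure.setIntegral_toReal_rnDeriv hac B, measureReal_def, hμap B hB,
    ENNReal.toReal_ofReal (hν0 B)]

end ExistsMeasure

section Representation

variable {X : Type*} [MeasurableSpace X] {m : Measure X} [IsProbabilityMeasure m]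
variable {LIM : (ℕ → ℝ) →ₗ[ℝ] ℝ}

/-- The indicator of a measurable set as an element of L¹. -/
noncomputable def indLp (m : Measure X) [IsProbabilityMeasure m] {B : Set X}
    (hB : MeasurableSet B) : Lp ℝ 1 m :=
  indicatorConstLp 1 hB (measure_ne_top m B) (1 : ℝ)

lemma indLp_coe {B : Set X} (hB : MeasurableSet B) :
    ⇑(indLp m hB) =ᵐ[m] B.indicator (fun _ => (1 : ℝ)) :=
  indicatorConstLp_coeFn

lemma indLp_pos {B : Set X} (hB : MeasurableSet B) : 0 ≤ᵐ[m] ⇑(indLp m hB) := by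
  filter_upwards [indLp_coe hB] with x hx
  rw [hx]
  by_cases h : x ∈ B <;> simp [Set.indicator_apply, h]

lemma indLp_int {B : Set X} (hB : MeasurableSet B) :
    ∫ x, (indLp m hB) x ∂m = (m B).toReal := by
  rw [indLp, integral_indicatorConstLp]
  simp
  rfl

lemma indLp_union {B C : Set X} (hB : MeasurableSet B) (hC : MeasurableSet C)
    (hd : Disjoint B C) : indLp m (hB.union hC) = indLp m hB + indLp m hC := by
  refine Lp.ext ?_
  filter_upwards [indLp_coe (hB.union hC), Lp.coeFn_add (indLp m hB) (indLp m hC),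
    indLp_coe hB, indLp_coe hC] with x hx h1 h2 h3
  rw [hx, h1, Set.indicator_union_of_disjoint hd]
  simp [h2, h3]

lemma indLp_smul {B : Set X} (hB : MeasurableSet B) (c : ℝ) :
    indicatorConstLp 1 hB (measure_ne_top m B) c = c • indLp m hB := by
  refine Lp.ext ?_
  filter_upwards [indicatorConstLp_coeFn (p := 1) (hs := hB)
      (hμs := measure_ne_top m B) (c := c),
    Lp.coeFn_smul c (indLp m hB), indLp_coe hB] with x hx h1 h2
  rw [hx, h1, Pi.smul_apply, h2]
  by_cases h : x ∈ B <;> simp [Set.indicator_apply, h]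

/-- Representation of a positive, integral-dominated functional on `L¹` by a
density `ρ` with values in `[0,1]`. -/
lemma exists_density_rep (F : Lp ℝ 1 m →L[ℝ] ℝ)
    (hFpos : ∀ g : Lp ℝ 1 m, 0 ≤ᵐ[m] ⇑g → 0 ≤ F g)
    (hFdom : ∀ g : Lp ℝ 1 m, 0 ≤ᵐ[m] ⇑g → F g ≤ ∫ x, g x ∂m) :
    ∃ ρ : X → ℝ, Measurable ρ ∧ (∀ x, 0 ≤ ρ x) ∧ (∀ x, ρ x ≤ 1) ∧
      ∀ g : Lp ℝ 1 m, F g = ∫ x, g x * ρ x ∂m := by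
  classical
  have hF01 : ∀ {B : Set X} (hB : MeasurableSet B),
      0 ≤ F (indLp m hB) ∧ F (indLp m hB) ≤ (m B).toReal := fun {B} hB =>
    ⟨hFpos _ (indLp_pos hB), le_of_le_of_eq (hFdom _ (indLp_pos hB)) (indLp_int hB)⟩
  -- the measure B ↦ F(1_B)
  have hτσ : ∀ (f : ℕ → Set X) (hfm : ∀ i, MeasurableSet (f i)),
      Pairwise (Function.onFun Disjoint f) →
      HasSum (fun i => F (indLp m (hfm i))) (F (indLp m (MeasurableSet.iUnion hfm))) := by
    intro f hfm hfd
    rw [hasSum_iff_tendsto_nat_of_nonneg (fun i => (hF01 (hfm i)).1)]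
    have hUm : ∀ N, MeasurableSet (⋃ i ∈ Finset.range N, f i) := fun N =>
      (Finset.range N).measurableSet_biUnion fun i _ => hfm i
    have hRm : ∀ N, MeasurableSet (⋃ i, f (N + i)) := fun N =>
      MeasurableSet.iUnion fun i => hfm _
    have hRa : Antitone (fun N => ⋃ i, f (N + i)) := by
      intro a b hab
      refine Set.iUnion_subset fun i => ?_
      have h : b + i = a + (b - a + i) := by omega
      rw [h]
      exact Set.subset_iUnion (fun j => f (a + j)) _
    have hRi : (⋂ N, ⋃ i, f (N + i)) = ∅ := by
      rw [Set.eq_empty_iff_forall_notMem]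
      intro x hx
      obtain ⟨i, hi⟩ := Set.mem_iUnion.1 (Set.mem_iInter.1 hx 0)
      obtain ⟨j, hj⟩ := Set.mem_iUnion.1 (Set.mem_iInter.1 hx (i + 1))
      exact Set.disjoint_left.1 (hfd (show (0 + i : ℕ) ≠ i + 1 + j by omega)) hi hj
    have hsplit : ∀ N, F (indLp m (MeasurableSet.iUnion hfm))
        = (∑ i ∈ Finset.range N, F (indLp m (hfm i))) + F (indLp m (hRm N)) := by
      intro N
      have hdisj : Disjoint (⋃ i ∈ Finset.range N, f i) (⋃ i, f (N + i)) := by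
        rw [Set.disjoint_left]
        rintro x hxU hxR
        simp only [Set.mem_iUnion, Finset.mem_range] at hxU
        obtain ⟨i, hi, hxi⟩ := hxU
        obtain ⟨j, hj⟩ := Set.mem_iUnion.1 hxR
        exact Set.disjoint_left.1 (hfd (show i ≠ N + j by omega)) hxi hj
      have hcover : (⋃ i, f i) = (⋃ i ∈ Finset.range N, f i) ∪ ⋃ i, f (N + i) := by
        apply Set.Subset.antisymm
        · refine Set.iUnion_subset fun i => ?_
          rcases lt_or_ge i N with h | h
          · exact fun x hx => Or.inl (by
              simp only [Set.mem_iUnion, Finset.mem_range]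
              exact ⟨i, h, hx⟩)
          · refine fun x hx => Or.inr (Set.mem_iUnion.2 ⟨i - N, ?_⟩)
            rwa [show N + (i - N) = i by omega]
        · refine Set.union_subset ?_ ?_
          · refine Set.iUnion₂_subset fun i _ => Set.subset_iUnion f i
          · exact Set.iUnion_subset fun i => Set.subset_iUnion f (N + i)
      have hUsum : ∀ M, F (indLp m (hUm M)) = ∑ i ∈ Finset.range M, F (indLp m (hfm i)) := by
        intro M
        induction M with
        | zero =>
            have he : (⋃ i ∈ Finset.range 0, f i) = (∅ : Set X) := by simp
            have h0 : indLp m (hUm 0) = 0 := by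
              refine Lp.ext ?_
              filter_upwards [indLp_coe (m := m) (hUm 0), Lp.coeFn_zero (E := ℝ) (p := 1) (μ := m)]
                with x hx h1
              rw [hx, h1, he]
              simp
            rw [Finset.sum_range_zero, h0, map_zero]
        | succ M ih =>
            have hU : (⋃ i ∈ Finset.range (M + 1), f i)
                = (⋃ i ∈ Finset.range M, f i) ∪ f M := by
              simp only [Finset.range_add_one]
              rw [Finset.set_biUnion_insert]
              exact Set.union_comm _ _
            have hdU : Disjoint (⋃ i ∈ Finset.range M, f i) (f M) := by
              rw [Set.disjoint_left]
              rintro x hxU hxM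
              simp only [Set.mem_iUnion, Finset.mem_range] at hxU
              obtain ⟨i, hi, hxi⟩ := hxU
              exact Set.disjoint_left.1 (hfd (show i ≠ M by omega)) hxi hxM
            have hind : indLp m (hUm (M + 1)) = indLp m (hUm M) + indLp m (hfm M) := by
              have h2 := indLp_union (m := m) (hUm M) (hfm M) hdU
              rw [← h2]
              apply Lp.ext
              filter_upwards [indLp_coe (m := m) (hUm (M+1)), indLp_coe (m := m) ((hUm M).union (hfm M))]
                with x hx h3
              rw [hx, h3, hU]
            rw [hind, map_add, ih, Finset.sum_range_succ]
      have hindU : indLp m (MeasurableSet.iUnion hfm) = indLp m (hUm N) + indLp m (hRm N) := by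
        have h2 := indLp_union (m := m) (hUm N) (hRm N) hdisj
        rw [← h2]
        apply Lp.ext
        filter_upwards [indLp_coe (m := m) (MeasurableSet.iUnion hfm),
          indLp_coe (m := m) ((hUm N).union (hRm N))] with x hx h3
        rw [hx, h3, hcover]
      rw [hindU, map_add, hUsum]
    have hR0 : Tendsto (fun N => F (indLp m (hRm N))) atTop (nhds 0) := by
      have hμR : Tendsto (fun N => m (⋃ i, f (N + i))) atTop
          (nhds (m (⋂ N, ⋃ i, f (N + i)))) :=
        tendsto_measure_iInter_atTop (fun N => (hRm N).nullMeasurableSet) hRa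
          ⟨0, measure_ne_top m _⟩
      rw [hRi] at hμR
      simp only [measure_empty] at hμR
      have hμRr : Tendsto (fun N => (m (⋃ i, f (N + i))).toReal) atTop (nhds 0) := by
        have := (ENNReal.tendsto_toReal (by simp : (0:ℝ≥0∞) ≠ ⊤)).comp hμR
        simpa [Function.comp_def] using this
      refine tendsto_of_tendsto_of_tendsto_of_le_of_le tendsto_const_nhds hμRr
        (fun N => (hF01 (hRm N)).1) (fun N => (hF01 (hRm N)).2)
    have := Tendsto.const_sub (F (indLp m (MeasurableSet.iUnion hfm))) hR0
    rw [sub_zero] at this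
    refine this.congr fun N => ?_
    rw [hsplit N]; ring
  -- the measure τ(B) = F(1_B)
  set τ : Measure X := Measure.ofMeasurable
    (fun B hB => ENNReal.ofReal (F (indLp m hB)))
    (by
      show ENNReal.ofReal (F (indLp m MeasurableSet.empty)) = 0
      have h0 : indLp m (MeasurableSet.empty (α := X)) = 0 := by
        refine Lp.ext ?_
        filter_upwards [indLp_coe (m := m) MeasurableSet.empty,
          Lp.coeFn_zero (E := ℝ) (p := 1) (μ := m)] with x hx h1
        rw [hx, h1]; simp
      rw [h0, map_zero]; simp)
    (by
      intro f hfm hfd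
      show ENNReal.ofReal (F (indLp m (MeasurableSet.iUnion hfm)))
        = ∑' i, ENNReal.ofReal (F (indLp m (hfm i)))
      have hs := hτσ f hfm hfd
      rw [← hs.tsum_eq,
        ENNReal.ofReal_tsum_of_nonneg (fun i => (hF01 (hfm i)).1) hs.summable])
    with hτdef
  have hτap : ∀ {B : Set X} (hB : MeasurableSet B),
      τ B = ENNReal.ofReal (F (indLp m hB)) := fun {B} hB =>
    Measure.ofMeasurable_apply B hB
  have hτle : τ ≤ m := by
    rw [Measure.le_iff]
    intro B hB
    rw [hτap hB]
    calc ENNReal.ofReal (F (indLp m hB)) ≤ ENNReal.ofReal ((m B).toReal) :=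
          ENNReal.ofReal_le_ofReal (hF01 hB).2
      _ = m B := ENNReal.ofReal_toReal (measure_ne_top m B)
  have hτac : τ ≪ m := Measure.absolutelyContinuous_of_le hτle
  haveI hτfin : IsFiniteMeasure τ :=
    ⟨lt_of_le_of_lt (hτle Set.univ) (measure_lt_top m _)⟩
  set ρ : X → ℝ := fun x => min ((τ.rnDeriv m x).toReal) 1 with hρdef
  have hρm : Measurable ρ :=
    (Measurable.ennreal_toReal (Measure.measurable_rnDeriv τ m)).min measurable_const
  have hρ0 : ∀ x, 0 ≤ ρ x := fun x => le_min ENNReal.toReal_nonneg zero_le_one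
  have hρ1 : ∀ x, ρ x ≤ 1 := fun x => min_le_right _ _
  have hρae : ρ =ᵐ[m] fun x => (τ.rnDeriv m x).toReal := by
    filter_upwards [Measure.rnDeriv_le_one_of_le hτle] with x hx
    have : (τ.rnDeriv m x).toReal ≤ 1 := by
      calc (τ.rnDeriv m x).toReal ≤ (1 : ℝ≥0∞).toReal :=
            ENNReal.toReal_mono (by simp) hx
        _ = 1 := by simp
    rw [hρdef]
    simp [min_eq_left this]
  have hρB : ∀ {B : Set X} (hB : MeasurableSet B),
      ∫ x in B, ρ x ∂m = F (indLp m hB) := by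
    intro B hB
    have h1 : ∫ x in B, ρ x ∂m = ∫ x in B, (τ.rnDeriv m x).toReal ∂m :=
      integral_congr_ae (ae_restrict_of_ae hρae)
    rw [h1, Measure.setIntegral_toReal_rnDeriv hτac B, measureReal_def, hτap hB,
      ENNReal.toReal_ofReal (hF01 hB).1]
  -- integrability of products with ρ
  have hInt : ∀ g : Lp ℝ 1 m, Integrable (fun x => g x * ρ x) m := by
    intro g
    have h := (L1.integrable_coeFn g).bdd_mul
      (hρm.aestronglyMeasurable) (c := 1) (Eventually.of_forall fun x => by
        rw [Real.norm_eq_abs, abs_of_nonneg (hρ0 x)]; exact hρ1 x)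
    refine h.congr ?_
    filter_upwards with x
    ring
  -- the functional g ↦ ∫ g ρ
  set G : Lp ℝ 1 m →L[ℝ] ℝ := LinearMap.mkContinuous
    { toFun := fun g => ∫ x, g x * ρ x ∂m
      map_add' := fun f g => by
        have h : (fun x => (f + g) x * ρ x)
            =ᵐ[m] fun x => f x * ρ x + g x * ρ x := by
          filter_upwards [Lp.coeFn_add f g] with x hx
          rw [hx]; simp [Pi.add_apply]; ring
        show ∫ x, (f + g) x * ρ x ∂m = _
        rw [integral_congr_ae h]
        exact integral_add (hInt f) (hInt g)
      map_smul' := fun c f => by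
        have h : (fun x => (c • f) x * ρ x)
            =ᵐ[m] fun x => c * (f x * ρ x) := by
          filter_upwards [Lp.coeFn_smul c f] with x hx
          rw [hx]; simp [Pi.smul_apply, smul_eq_mul]; ring
        show ∫ x, (c • f) x * ρ x ∂m = c • ∫ x, f x * ρ x ∂m
        rw [integral_congr_ae h, integral_const_mul]
        rfl } 1
    (fun g => by
      rw [one_mul, L1.norm_eq_integral_norm]
      calc ‖∫ x, g x * ρ x ∂m‖ ≤ ∫ x, ‖g x * ρ x‖ ∂m :=
            norm_integral_le_integral_norm _
        _ ≤ ∫ x, ‖g x‖ ∂m := by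
            refine integral_mono_ae (hInt g).norm (L1.integrable_coeFn g).norm ?_
            filter_upwards with x
            rw [norm_mul]
            calc ‖g x‖ * ‖ρ x‖ ≤ ‖g x‖ * 1 := by
                  refine mul_le_mul_of_nonneg_left ?_ (norm_nonneg _)
                  rw [Real.norm_eq_abs, abs_of_nonneg (hρ0 x)]; exact hρ1 x
              _ = ‖g x‖ := mul_one _)
    with hGdef
  have hGap : ∀ g : Lp ℝ 1 m, G g = ∫ x, g x * ρ x ∂m := fun g => rfl
  -- F and G agree
  haveI : Fact ((1 : ℝ≥0∞) ≤ 1) := ⟨le_refl _⟩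
  have hFG : ∀ g : Lp ℝ 1 m, F g = G g := by
    refine Lp.induction (p := 1) (by simp : (1 : ℝ≥0∞) ≠ ⊤)
      (fun g => F g = G g) ?_ ?_ ?_
    · intro c s hs hμs
      rw [Lp.simpleFunc.coe_indicatorConst]
      have he : indicatorConstLp 1 hs hμs.ne c
          = c • indicatorConstLp 1 hs (measure_ne_top m s) (1 : ℝ) := indLp_smul hs c
      rw [he, _root_.map_smul, _root_.map_smul]
      have hBi : G (indLp m hs) = F (indLp m hs) := by
        rw [hGap, ← hρB hs]
        have h : (fun x => (indLp m hs) x * ρ x) =ᵐ[m] s.indicator ρ := by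
          filter_upwards [indLp_coe (m := m) hs] with x hx
          rw [hx]
          by_cases hxs : x ∈ s <;> simp [Set.indicator_apply, hxs]
        rw [integral_congr_ae h, integral_indicator hs]
      show c • F (indLp m hs) = c • G (indLp m hs)
      rw [hBi]
    · intro f g hf hg _ h1 h2
      rw [map_add, map_add, h1, h2]
    · exact isClosed_eq F.continuous G.continuous
  exact ⟨ρ, hρm, hρ0, hρ1, fun g => by rw [hFG g, hGap]⟩


end Representation

section LimExchange

variable {X : Type*} [MeasurableSpace X] {m : Measure X} [IsProbabilityMeasure m]
variable {LIM : (ℕ → ℝ) →ₗ[ℝ] ℝ}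

lemma lim_F_eq (hpos : LimPos LIM) (hlim : LimLim LIM)
    {u : ℕ → Lp ℝ 1 m} (hupos : ∀ n, 0 ≤ᵐ[m] ⇑(u n)) (huint : ∀ n, ∫ x, u n x ∂m = 1)
    {d : Lp ℝ 1 m} (hdpos : 0 ≤ᵐ[m] ⇑d)
    (hd : ∀ B : Set X, MeasurableSet B →
      LIM (fun n => ∫ x in B, u n x ∂m) = ∫ x in B, d x ∂m)
    (F : Lp ℝ 1 m →L[ℝ] ℝ)
    (hFpos : ∀ g : Lp ℝ 1 m, 0 ≤ᵐ[m] ⇑g → 0 ≤ F g)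
    (hFdom : ∀ g : Lp ℝ 1 m, 0 ≤ᵐ[m] ⇑g → F g ≤ ∫ x, g x ∂m) :
    LIM (fun n => F (u n)) = F d := by
  classical
  obtain ⟨ρ, hρm, hρ0, hρ1, hrep⟩ := exists_density_rep F hFpos hFdom
  have hdint : ∫ x, d x ∂m = 1 := by
    have h1 := hd Set.univ MeasurableSet.univ
    rw [Measure.restrict_univ] at h1
    have h2 : (fun n => ∫ x, u n x ∂m) = fun _ => (1 : ℝ) := funext huint
    rw [h2, lim_const hlim] at h1
    exact h1.symm
  -- main estimate for each K ≥ 1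
  have hK : ∀ K : ℕ, 1 ≤ K → |LIM (fun n => F (u n)) - F d| ≤ 2 / K := by
    intro K hK1
    have hKpos : (0 : ℝ) < K := by exact_mod_cast hK1
    set C : ℕ → Set X := fun i => {x | ⌊(K : ℝ) * ρ x⌋ = (i : ℤ)} with hCdef
    have hCm : ∀ i, MeasurableSet (C i) := by
      intro i
      have : C i = (fun x => ⌊(K : ℝ) * ρ x⌋) ⁻¹' {(i : ℤ)} := rfl
      rw [this]
      exact ((measurable_const.mul hρm).floor) (measurableSet_singleton _)
    set sK : X → ℝ := fun x => ∑ i ∈ Finset.range (K + 1),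
      ((i : ℝ) / K) * (C i).indicator (fun _ => (1 : ℝ)) x with hsKdef
    have hsKm : Measurable sK := by
      refine Finset.measurable_sum _ fun i _ => ?_
      exact (measurable_const.indicator (hCm i)).const_mul _
    have hfloor0 : ∀ x, 0 ≤ ⌊(K : ℝ) * ρ x⌋ := fun x =>
      Int.floor_nonneg.2 (mul_nonneg (le_of_lt hKpos) (hρ0 x))
    have hfloorK : ∀ x, ⌊(K : ℝ) * ρ x⌋ ≤ (K : ℤ) := by
      intro x
      have h1 : (K : ℝ) * ρ x ≤ K := by nlinarith [hρ1 x]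
      calc ⌊(K : ℝ) * ρ x⌋ ≤ ⌊(K : ℝ)⌋ := Int.floor_le_floor h1
        _ = (K : ℤ) := Int.floor_natCast K
    have hsval : ∀ x, sK x = (⌊(K : ℝ) * ρ x⌋ : ℝ) / K := by
      intro x
      set j : ℤ := ⌊(K : ℝ) * ρ x⌋ with hjdef
      have hj0 := hfloor0 x
      have hjK := hfloorK x
      show ∑ i ∈ Finset.range (K + 1),
        ((i : ℝ) / K) * (C i).indicator (fun _ => (1 : ℝ)) x = (j : ℝ) / K
      have hmem : j.toNat ∈ Finset.range (K + 1) := by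
        rw [Finset.mem_range]; omega
      rw [Finset.sum_eq_single_of_mem j.toNat hmem ?_]
      · have hxC : x ∈ C j.toNat := by
          show ⌊(K : ℝ) * ρ x⌋ = ((j.toNat : ℕ) : ℤ)
          omega
        rw [Set.indicator_of_mem hxC]
        have : ((j.toNat : ℕ) : ℝ) = (j : ℝ) := by
          have := Int.toNat_of_nonneg hj0
          exact_mod_cast congrArg (Int.cast : ℤ → ℝ) this
        rw [this]; ring
      · intro i _ hi
        have hxC : x ∉ C i := by
          show ¬(⌊(K : ℝ) * ρ x⌋ = (i : ℤ))
          omega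
        rw [Set.indicator_of_notMem hxC]; ring
    have hs0 : ∀ x, 0 ≤ sK x := by
      intro x
      rw [hsval x]
      have := hfloor0 x
      positivity
    have hsle : ∀ x, sK x ≤ ρ x := by
      intro x
      rw [hsval x, div_le_iff₀ hKpos]
      calc (⌊(K : ℝ) * ρ x⌋ : ℝ) ≤ (K : ℝ) * ρ x := Int.floor_le _
        _ = ρ x * K := mul_comm _ _
    have hsub : ∀ x, ρ x - sK x ≤ 1 / K := by
      intro x
      rw [hsval x]
      have h1 : (K : ℝ) * ρ x < (⌊(K : ℝ) * ρ x⌋ : ℝ) + 1 := Int.lt_floor_add_one _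
      rw [sub_le_iff_le_add, ← add_div, le_div_iff₀ hKpos]
      linarith [h1]
    -- integrability facts
    have hIntρ : ∀ g : Lp ℝ 1 m, Integrable (fun x => g x * ρ x) m := by
      intro g
      have h := (L1.integrable_coeFn g).bdd_mul (hρm.aestronglyMeasurable)
        (c := 1) (Eventually.of_forall fun x => by rw [Real.norm_eq_abs, abs_of_nonneg (hρ0 x)]; exact hρ1 x)
      exact h.congr (by filter_upwards with x; ring)
    have hIntsK : ∀ g : Lp ℝ 1 m, Integrable (fun x => g x * sK x) m := by
      intro g
      have h := (L1.integrable_coeFn g).bdd_mul (hsKm.aestronglyMeasurable)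
        (c := 1) (Eventually.of_forall fun x => by
          rw [Real.norm_eq_abs, abs_of_nonneg (hs0 x)]
          exact le_trans (hsle x) (hρ1 x))
      exact h.congr (by filter_upwards with x; ring)
    -- expansion of ∫ g * sK as a finite sum of set integrals
    have hexp : ∀ g : Lp ℝ 1 m, ∫ x, g x * sK x ∂m
        = ∑ i ∈ Finset.range (K + 1), ((i : ℝ) / K) * ∫ x in C i, g x ∂m := by
      intro g
      have h1 : (fun x => g x * sK x)
          = fun x => ∑ i ∈ Finset.range (K + 1),
              ((i : ℝ) / K) * ((C i).indicator (fun y => g y) x) := by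
        funext x
        rw [hsKdef, Finset.mul_sum]
        refine Finset.sum_congr rfl fun i _ => ?_
        by_cases h : x ∈ C i <;> simp [Set.indicator_apply, h] <;> ring
      rw [h1, integral_finset_sum _ fun i _ =>
        (((L1.integrable_coeFn g).indicator (hCm i)).const_mul _)]
      refine Finset.sum_congr rfl fun i _ => ?_
      rw [integral_const_mul, integral_indicator (hCm i)]
    -- LIM of w equals ∫ d * sK
    have hw : LIM (fun n => ∫ x, u n x * sK x ∂m) = ∫ x, d x * sK x ∂m := by
      have h2 : (fun n => ∫ x, u n x * sK x ∂m)
          = ∑ i ∈ Finset.range (K + 1),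
              ((i : ℝ) / K) • (fun n => ∫ x in C i, u n x ∂m) := by
        funext n
        rw [hexp (u n), Finset.sum_apply]
        refine Finset.sum_congr rfl fun i _ => ?_
        simp [Pi.smul_apply, smul_eq_mul]
      rw [h2, map_sum, hexp d]
      refine Finset.sum_congr rfl fun i _ => ?_
      rw [LinearMap.map_smul, hd (C i) (hCm i), smul_eq_mul]
    -- per-element estimate
    have hb1 : ∀ g : Lp ℝ 1 m, 0 ≤ᵐ[m] ⇑g → ∫ x, g x ∂m = 1 →
        |∫ x, g x * ρ x ∂m - ∫ x, g x * sK x ∂m| ≤ 1 / K := by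
      intro g hg hgi
      rw [← integral_sub (hIntρ g) (hIntsK g)]
      have hsubint : Integrable (fun x => g x * ρ x - g x * sK x) m :=
        (hIntρ g).sub (hIntsK g)
      rw [abs_le]
      constructor
      · have h3 : 0 ≤ ∫ x, (g x * ρ x - g x * sK x) ∂m := by
          refine integral_nonneg_of_ae ?_
          filter_upwards [hg] with x hx
          simp only [Pi.zero_apply] at hx ⊢
          have h := mul_nonneg hx (sub_nonneg.2 (hsle x))
          rw [mul_sub] at h
          linarith
        have h4 : (0:ℝ) ≤ 1 / K := by positivity
        linarith
      · have h5 : ∫ x, (g x * ρ x - g x * sK x) ∂m ≤ ∫ x, (1 / K) * g x ∂m := by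
          refine integral_mono_ae hsubint ((L1.integrable_coeFn g).const_mul _) ?_
          filter_upwards [hg] with x hx
          simp only [Pi.zero_apply] at hx
          have h := mul_le_mul_of_nonneg_left (hsub x) hx
          rw [mul_sub] at h
          have h2 : (g : X → ℝ) x * (1 / K) = 1 / K * (g : X → ℝ) x := mul_comm _ _
          linarith
        rw [integral_const_mul, hgi, mul_one] at h5
        exact h5
    -- assemble
    have hF1 : ∀ n, F (u n) = ∫ x, u n x * ρ x ∂m := fun n => hrep (u n)
    have hF2 : F d = ∫ x, d x * ρ x ∂m := hrep d
    have hA : |LIM (fun n => F (u n)) - LIM (fun n => ∫ x, u n x * sK x ∂m)| ≤ 1 / K := by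
      have h7 : LIM (fun n => F (u n)) - LIM (fun n => ∫ x, u n x * sK x ∂m)
          = LIM ((fun n => F (u n)) - fun n => ∫ x, u n x * sK x ∂m) := by
        rw [map_sub]
      rw [h7]
      refine lim_abs_le hpos hlim fun n => ?_
      have h8 : ((fun n => F (u n)) - fun n => ∫ x, u n x * sK x ∂m) n
          = F (u n) - ∫ x, u n x * sK x ∂m := rfl
      rw [h8, hF1 n]
      exact hb1 (u n) (hupos n) (huint n)
    have hB : |F d - ∫ x, d x * sK x ∂m| ≤ 1 / K := by
      rw [hF2]
      exact hb1 d hdpos hdint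
    rw [← hw] at hB
    calc |LIM (fun n => F (u n)) - F d|
        ≤ |LIM (fun n => F (u n)) - LIM (fun n => ∫ x, u n x * sK x ∂m)|
          + |F d - LIM (fun n => ∫ x, u n x * sK x ∂m)| := by
          rw [abs_sub_comm (F d)]
          exact abs_sub_le _ _ _
      _ ≤ 1 / K + 1 / K := add_le_add hA hB
      _ = 2 / K := by ring
  -- conclude
  have htend : Tendsto (fun K : ℕ => 2 / (K : ℝ)) atTop (nhds 0) :=
    tendsto_const_div_atTop_nhds_zero_nat 2
  have hle : |LIM (fun n => F (u n)) - F d| ≤ 0 := by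
    refine ge_of_tendsto htend ?_
    rw [eventually_atTop]
    exact ⟨1, fun K hK1 => hK K hK1⟩
  have := abs_nonneg (LIM (fun n => F (u n)) - F d)
  have h9 : LIM (fun n => F (u n)) - F d = 0 := by
    rw [← abs_eq_zero]; linarith
  linarith

end LimExchange

section Assemble

variable {Ω : Type*} {X : Type*} [MeasurableSpace X]

/-- The goodness predicate for a point `ω`. -/
def GoodPt (m : Measure X) [IsProbabilityMeasure m] [MeasurableSpace Ω] (σ : Ω ≃ᵐ Ω)
    (P : Ω → (Lp ℝ 1 m →L[ℝ] Lp ℝ 1 m)) (ω : Ω) : Prop :=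
  (∀ k : ℕ, MarkovAt m P ((⇑σ.symm)^[k] ω)) ∧
    WeaklySeqPrecompact (fun n : ℕ => clmCocycle σ P n (σ.symm^[n] ω) (oneLp m))

lemma goodPt_props (m : Measure X) [IsProbabilityMeasure m] [MeasurableSpace Ω]
    (σ : Ω ≃ᵐ Ω) (P : Ω → (Lp ℝ 1 m →L[ℝ] Lp ℝ 1 m)) (ω : Ω)
    (h : GoodPt m σ P ω) :
    (∀ n, 0 ≤ᵐ[m] ⇑(clmCocycle σ P n (σ.symm^[n] ω) (oneLp m))) ∧
      (∀ n, ∫ x, (clmCocycle σ P n (σ.symm^[n] ω) (oneLp m)) x ∂m = 1) := by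
  have hmain : ∀ n, 0 ≤ᵐ[m] ⇑(clmCocycle σ P n (σ.symm^[n] ω) (oneLp m)) ∧
      ∫ x, (clmCocycle σ P n (σ.symm^[n] ω) (oneLp m)) x ∂m = ∫ x, (oneLp m) x ∂m := by
    intro n
    refine cocycle_pos_int σ P n ((⇑σ.symm)^[n] ω) ?_ (oneLp m) oneLp_pos
    intro k hk
    have h1 : (⇑σ)^[k] ((⇑σ.symm)^[n] ω) = (⇑σ.symm)^[n - k] ω := by
      have h2 := iter_cancel σ k (n - k) ω
      rwa [show k + (n - k) = n by omega] at h2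
    rw [h1]
    exact h.1 (n - k)
  exact ⟨fun n => (hmain n).1, fun n => by rw [(hmain n).2, oneLp_int]⟩

lemma cocycle_shift (m : Measure X) [IsProbabilityMeasure m] [MeasurableSpace Ω]
    (σ : Ω ≃ᵐ Ω) (P : Ω → (Lp ℝ 1 m →L[ℝ] Lp ℝ 1 m)) (ω : Ω) (n : ℕ) (g : Lp ℝ 1 m) :
    clmCocycle σ P (n + 1) (σ.symm^[n + 1] (σ ω)) g
      = P ω (clmCocycle σ P n (σ.symm^[n] ω) g) := by
  have h1 : (⇑σ.symm)^[n + 1] (σ ω) = (⇑σ.symm)^[n] ω := by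
    rw [Function.iterate_succ_apply, σ.symm_apply_apply]
  rw [h1, clmCocycle_succ' (⇑σ) P n ((⇑σ.symm)^[n] ω), iter_cancel_self σ n ω]
  rfl

end Assemble

/-- If `{P^{(n)}_{σ^{-n}ω} 1_X}_n` is weakly precompact for ℙ-a.e. `ω`, then
for any Banach limit `LIM` and ℙ-a.e. `ω`, the set function
`μ_ω(E) = LIM({∫_E P^{(n)}_{σ^{-n}ω} 1_X dm}_n)` is a countably additive
probability measure, absolutely continuous w.r.t. `m`, whose densities satisfy
`P_ω (dμ_ω/dm) = dμ_{σω}/dm`. -/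
theorem banach_limit_gives_invariant_measure
    {Ω : Type*} [MeasurableSpace Ω] (ℙ : Measure Ω) [IsProbabilityMeasure ℙ]
    {X : Type*} [MeasurableSpace X] (m : Measure X) [IsProbabilityMeasure m]
    (σ : Ω ≃ᵐ Ω) (hσ : Ergodic σ ℙ)
    (P : Ω → (Lp ℝ 1 m →L[ℝ] Lp ℝ 1 m))
    (hMarkov : ∀ᵐ ω ∂ℙ,
      (∀ g : Lp ℝ 1 m, 0 ≤ᵐ[m] ⇑g → 0 ≤ᵐ[m] ⇑(P ω g)) ∧
      (∀ g : Lp ℝ 1 m, ∫ x, (P ω g) x ∂m = ∫ x, g x ∂m))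
    (hwpc : ∀ᵐ ω ∂ℙ,
      WeaklySeqPrecompact (fun n : ℕ => clmCocycle σ P n (σ.symm^[n] ω) (oneLp m)))
    (LIM : (ℕ → ℝ) →ₗ[ℝ] ℝ)
    (hLIMpos : ∀ u : ℕ → ℝ, (∃ M, ∀ n, |u n| ≤ M) → (∀ n, 0 ≤ u n) → 0 ≤ LIM u)
    (hLIMshift : ∀ u : ℕ → ℝ, (∃ M, ∀ n, |u n| ≤ M) →
      LIM (fun n => u (n + 1)) = LIM u)
    (hLIMlim : ∀ (u : ℕ → ℝ) (a : ℝ), Tendsto u atTop (nhds a) → LIM u = a) :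
    ∃ (μ : Ω → Measure X) (d : Ω → Lp ℝ 1 m), ∀ᵐ ω ∂ℙ,
      (∀ E : Set X, MeasurableSet E → μ ω E = ENNReal.ofReal
        (LIM (fun n => ∫ x in E, (clmCocycle σ P n (σ.symm^[n] ω) (oneLp m)) x ∂m))) ∧
      IsProbabilityMeasure (μ ω) ∧
      μ ω ≪ m ∧
      (⇑(d ω) =ᵐ[m] fun x => ((μ ω).rnDeriv m x).toReal) ∧
      P ω (d ω) = d (σ ω) := by
  classical
  have hpos : LimPos LIM := hLIMpos
  have hshift : LimShift LIM := hLIMshift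
  have hlim : LimLim LIM := hLIMlim
  have hMP : MeasurePreserving (⇑σ) ℙ ℙ := hσ.toMeasurePreserving
  have hMPs : MeasurePreserving (⇑σ.symm) ℙ ℙ := hMP.symm σ
  have hGood : ∀ᵐ ω ∂ℙ, GoodPt m σ P ω := by
    have h1 : ∀ k : ℕ, ∀ᵐ ω ∂ℙ, MarkovAt m P ((⇑σ.symm)^[k] ω) := fun k =>
      ((hMPs.iterate k).quasiMeasurePreserving).ae hMarkov
    have h2 : ∀ᵐ ω ∂ℙ, ∀ k : ℕ, MarkovAt m P ((⇑σ.symm)^[k] ω) := ae_all_iff.2 h1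
    filter_upwards [h2, hwpc] with ω hω hwω
    exact ⟨hω, hwω⟩
  have key : ∀ ω, GoodPt m σ P ω → ∃ p : Measure X × Lp ℝ 1 m,
      (∀ E : Set X, MeasurableSet E → p.1 E = ENNReal.ofReal
        (LIM (fun n => ∫ x in E, (clmCocycle σ P n (σ.symm^[n] ω) (oneLp m)) x ∂m))) ∧
      IsProbabilityMeasure p.1 ∧ p.1 ≪ m ∧
      (⇑p.2 =ᵐ[m] fun x => (p.1.rnDeriv m x).toReal) ∧ (0 ≤ᵐ[m] ⇑p.2) ∧
      (∀ B : Set X, MeasurableSet B →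
        LIM (fun n => ∫ x in B, (clmCocycle σ P n (σ.symm^[n] ω) (oneLp m)) x ∂m)
          = ∫ x in B, p.2 x ∂m) := by
    intro ω h
    obtain ⟨hup, hui⟩ := goodPt_props m σ P ω h
    obtain ⟨μ, d, h1, h2, h3, h4, h5, h6⟩ :=
      exists_measure_density hpos hshift hlim hup hui h.2
    exact ⟨(μ, d), h1, h2, h3, h4, h5, h6⟩
  refine ⟨fun ω => if h : GoodPt m σ P ω then (key ω h).choose.1 else m,
    fun ω => if h : GoodPt m σ P ω then (key ω h).choose.2 else 0, ?_⟩
  filter_upwards [hGood, (hMP.quasiMeasurePreserving).ae hGood] with ω hω hσω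
  simp only [dif_pos hω, dif_pos hσω]
  obtain ⟨hs1, hs2, hs3, hs4, hs5, hs6⟩ := (key ω hω).choose_spec
  obtain ⟨ht1, ht2, ht3, ht4, ht5, ht6⟩ := (key (σ ω) hσω).choose_spec
  refine ⟨hs1, hs2, hs3, hs4, ?_⟩
  -- the equivariance of densities
  obtain ⟨hup, hui⟩ := goodPt_props m σ P ω hω
  obtain ⟨hupσ, huiσ⟩ := goodPt_props m σ P (σ ω) hσω
  have hM0 : MarkovAt m P ω := by
    have := hω.1 0
    rwa [Function.iterate_zero_apply] at this
  set dω := (key ω hω).choose.2 with hdωdef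
  set dσω := (key (σ ω) hσω).choose.2 with hdσωdef
  apply Lp.ext
  refine Integrable.ae_eq_of_forall_setIntegral_eq _ _
    (L1.integrable_coeFn (P ω dω)) (L1.integrable_coeFn dσω) ?_
  intro B hB _
  -- the functional F g = ∫_B (P ω g)
  set F : Lp ℝ 1 m →L[ℝ] ℝ := (setIntegralCLM m B).comp (P ω) with hFdef
  have hFapp : ∀ g : Lp ℝ 1 m, F g = ∫ x in B, (P ω g) x ∂m := fun g => rfl
  have hFpos : ∀ g : Lp ℝ 1 m, 0 ≤ᵐ[m] ⇑g → 0 ≤ F g := by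
    intro g hg
    rw [hFapp]
    refine setIntegral_nonneg_of_ae_restrict ?_
    filter_upwards [ae_restrict_of_ae (hM0.1 g hg)] with y hy using hy
  have hFdom : ∀ g : Lp ℝ 1 m, 0 ≤ᵐ[m] ⇑g → F g ≤ ∫ x, g x ∂m := by
    intro g hg
    rw [hFapp, ← hM0.2 g]
    exact setIntegral_le_integral (L1.integrable_coeFn _) (hM0.1 g hg)
  have hLHS : ∫ x in B, (P ω dω) x ∂m = LIM (fun n =>
      ∫ x in B, (P ω (clmCocycle σ P n (σ.symm^[n] ω) (oneLp m))) x ∂m) := by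
    have := lim_F_eq hpos hlim hup hui hs5 hs6 F hFpos hFdom
    rw [hFapp] at this
    exact this.symm
  have hshiftstep : LIM (fun n =>
        ∫ x in B, (clmCocycle σ P n (σ.symm^[n] (σ ω)) (oneLp m)) x ∂m)
      = LIM (fun n =>
        ∫ x in B, (P ω (clmCocycle σ P n (σ.symm^[n] ω) (oneLp m))) x ∂m) := by
    have hb : ∀ n, |∫ x in B, (clmCocycle σ P n (σ.symm^[n] (σ ω)) (oneLp m)) x ∂m| ≤ 1 :=
      fun n => abs_setInt_le (hupσ n) (huiσ n) _
    have h1 := hLIMshift (fun n =>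
      ∫ x in B, (clmCocycle σ P n (σ.symm^[n] (σ ω)) (oneLp m)) x ∂m) ⟨1, hb⟩
    rw [← h1]
    congr 1
    funext n
    show ∫ x in B, (clmCocycle σ P (n + 1) (σ.symm^[n + 1] (σ ω)) (oneLp m)) x ∂m = _
    rw [cocycle_shift m σ P ω n (oneLp m)]
  rw [hLHS, ← hshiftstep, ht6 B hB]
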